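/- Let f : I → ℝ be twice differentiable with f > 0 and f' ≠ 0 on an open interval I, let m, n be real numbers, ν := √(1 + n² + m²), and c₁, c₂, c₃ positive constants. Define f₁ = c₁c₂c₃·f^{−ν−2}·(f')², f₂ = f, f₃ = c₂f^m, f₄ = c₃f^n, λ = −((1 + n + m + ν)/4)·ln f. Then λ satisfies the ODE λ'' = (f₁(f₂f₃'f₄' + f₂'f₃f₄' + f₂'f₃'f₄) + 2λ'(f₁'f₂f₃f₄ + f₁f₂'f₃f₄ + f₁f₂f₃'f₄ + f₁f₂f₃f₄'))/(4f₁f₂f₃f₄). -/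

import Mathlib

theorem stmt_18 (m n c₁ c₂ c₃ : ℝ) (hc₁ : 0 < c₁) (hc₂ : 0 < c₂) (hc₃ : 0 < c₃)
    (ν : ℝ) (hν : ν = Real.sqrt (1 + n ^ 2 + m ^ 2))
    (a b : ℝ) (f : ℝ → ℝ)
    (hdiff : ∀ x ∈ Set.Ioo a b, DifferentiableAt ℝ f x ∧ DifferentiableAt ℝ (deriv f) x)
    (hpos : ∀ x ∈ Set.Ioo a b, 0 < f x)
    (hder : ∀ x ∈ Set.Ioo a b, deriv f x ≠ 0)
    (f₁ f₂ f₃ f₄ lam : ℝ → ℝ)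
    (hf₁ : f₁ = fun x => c₁ * c₂ * c₃ * f x ^ (-ν - 2) * (deriv f x) ^ 2)
    (hf₂ : f₂ = f)
    (hf₃ : f₃ = fun x => c₂ * f x ^ m)
    (hf₄ : f₄ = fun x => c₃ * f x ^ n)
    (hlam : lam = fun x => -((1 + n + m + ν) / 4) * Real.log (f x)) :
    ∀ x ∈ Set.Ioo a b,
      deriv (deriv lam) x =
        (f₁ x * (f₂ x * deriv f₃ x * deriv f₄ x + deriv f₂ x * f₃ x * deriv f₄ x
            + deriv f₂ x * deriv f₃ x * f₄ x)
          + 2 * deriv lam x * (deriv f₁ x * f₂ x * f₃ x * f₄ x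
            + f₁ x * deriv f₂ x * f₃ x * f₄ x + f₁ x * f₂ x * deriv f₃ x * f₄ x
            + f₁ x * f₂ x * f₃ x * deriv f₄ x)) /
        (4 * f₁ x * f₂ x * f₃ x * f₄ x) := by
  intro x hx
  set K : ℝ := -((1 + n + m + ν) / 4) with hK
  have hν2 : ν ^ 2 = 1 + n ^ 2 + m ^ 2 := by
    rw [hν, Real.sq_sqrt]; positivity
  have hFpos : 0 < f x := hpos x hx
  have hfx : f x ≠ 0 := hFpos.ne'
  have hD : deriv f x ≠ 0 := hder x hx
  have hF : HasDerivAt f (deriv f x) x := (hdiff x hx).1.hasDerivAt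
  have hF2 : HasDerivAt (deriv f) (deriv (deriv f) x) x := (hdiff x hx).2.hasDerivAt
  -- deriv lam on Ioo
  have hdlam : ∀ y ∈ Set.Ioo a b, deriv lam y = K * (deriv f y / f y) := by
    intro y hy
    have hFy : HasDerivAt f (deriv f y) y := (hdiff y hy).1.hasDerivAt
    have : HasDerivAt lam (K * (deriv f y / f y)) y := by
      rw [hlam]; exact (hFy.log (hpos y hy).ne').const_mul K
    exact this.deriv
  have he : deriv lam =ᶠ[nhds x] fun y => K * (deriv f y / f y) :=
    Filter.eventuallyEq_of_mem (isOpen_Ioo.mem_nhds hx) hdlam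
  have hL2 : deriv (deriv lam) x
      = K * ((deriv (deriv f) x * f x - deriv f x * deriv f x) / f x ^ 2) := by
    rw [he.deriv_eq]
    exact (((hF2.div hF hfx)).const_mul K).deriv
  -- derivatives of the fᵢ at x
  have hd2 : deriv f₂ x = deriv f x := by rw [hf₂]
  have hd3 : deriv f₃ x = c₂ * (deriv f x * m * f x ^ (m - 1)) := by
    rw [hf₃]; exact ((hF.rpow_const (Or.inl hfx)).const_mul c₂).deriv
  have hd4 : deriv f₄ x = c₃ * (deriv f x * n * f x ^ (n - 1)) := by
    rw [hf₄]; exact ((hF.rpow_const (Or.inl hfx)).const_mul c₃).deriv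
  have hd1 : deriv f₁ x
      = c₁ * c₂ * c₃ * (deriv f x * (-ν - 2) * f x ^ (-ν - 2 - 1)) * deriv f x ^ 2
        + c₁ * c₂ * c₃ * f x ^ (-ν - 2)
          * ((2 : ℕ) * deriv f x ^ (2 - 1) * deriv (deriv f) x) := by
    rw [hf₁]
    exact (((hF.rpow_const (Or.inl hfx)).const_mul (c₁ * c₂ * c₃)).mul (hF2.pow 2)).deriv
  have hd0 : deriv lam x = K * (deriv f x / f x) := hdlam x hx
  rw [hL2, hd0, hd1, hd2, hd3, hd4, hf₁, hf₂, hf₃, hf₄]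
  simp only
  have e1 : f x ^ (m - 1) = f x ^ m / f x := by
    rw [Real.rpow_sub hFpos, Real.rpow_one]
  have e2 : f x ^ (n - 1) = f x ^ n / f x := by
    rw [Real.rpow_sub hFpos, Real.rpow_one]
  have e3 : f x ^ (-ν - 2 - 1) = f x ^ (-ν - 2) / f x := by
    rw [Real.rpow_sub hFpos, Real.rpow_one]
  have hA : f x ^ m ≠ 0 := (Real.rpow_pos_of_pos hFpos m).ne'
  have hB : f x ^ n ≠ 0 := (Real.rpow_pos_of_pos hFpos n).ne'
  have hC : f x ^ (-ν - 2) ≠ 0 := (Real.rpow_pos_of_pos hFpos _).ne'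
  rw [e1, e2, e3, hK]
  push_cast
  field_simp
  linear_combination (-2 * deriv f x ^ 2) * hν2
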